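/- Let a, m be natural numbers and let U be a unitary complex matrix of size (a+m)×(a+m) whose top-left a×a block is a diagonal matrix M with nonnegative real diagonal entries. Then at least a − m of the diagonal entries of M are equal to 1, i.e., the cardinality of {s ∈ {0,…,a−1} : M_{ss} = 1} is at least a − m. -/

import Mathlib

open Matrix

/-- **Appendix D counting argument**: if the top-left `a×a` block of a unitary
matrix of size `(a+m)×(a+m)` is diagonal with nonnegative real entries, then at
least `a − m` of these diagonal entries equal `1`. -/
theorem unitary_diagonal_block_many_ones
    (a m : ℕ)
    (U : Matrix (Fin (a + m)) (Fin (a + m)) ℂ)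
    (hU : U ∈ Matrix.unitaryGroup (Fin (a + m)) ℂ)
    (M : Fin a → ℝ) (hMnn : ∀ s, 0 ≤ M s)
    (hblock : ∀ s s' : Fin a,
      U (Fin.castAdd m s) (Fin.castAdd m s') = if s = s' then (M s : ℂ) else 0) :
    a - m ≤ Nat.card {s : Fin a // M s = 1} := by
  classical
  have h1 : U * star U = 1 := Matrix.mem_unitaryGroup_iff.mp hU
  -- rows of off-diagonal block
  set v : Fin a → EuclideanSpace ℂ (Fin m) :=
    fun s => WithLp.toLp 2 (fun j => U (Fin.castAdd m s) (Fin.natAdd a j)) with hv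
  have hrow : ∀ s s' : Fin a,
      ∑ k, U (Fin.castAdd m s) k * star (U (Fin.castAdd m s') k)
        = if s = s' then 1 else 0 := by
    intro s s'
    have := congrFun (congrFun h1 (Fin.castAdd m s)) (Fin.castAdd m s')
    rw [Matrix.mul_apply] at this
    simp only [Matrix.star_apply, Matrix.one_apply] at this
    rw [this]
    by_cases h : s = s'
    · simp [h]
    · rw [if_neg h, if_neg fun hh : Fin.castAdd m s = Fin.castAdd m s' =>
        h (Fin.ext (by simpa using congrArg Fin.val hh))]
  have hsplit : ∀ s s' : Fin a,
      ∑ k, U (Fin.castAdd m s) k * star (U (Fin.castAdd m s') k)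
        = (if s = s' then ((M s : ℂ) * star (M s' : ℂ)) else 0)
          + ∑ j : Fin m, v s j * star (v s' j) := by
    intro s s'
    rw [Fin.sum_univ_add (f := fun k => U (Fin.castAdd m s) k * star (U (Fin.castAdd m s') k))]
    congr 1
    simp only [hblock]
    by_cases h : s = s'
    · subst h
      rw [Finset.sum_eq_single s]
      · simp
      · intro t _ ht; simp [Ne.symm ht]
      · simp
    · rw [if_neg h]
      apply Finset.sum_eq_zero
      intro t _
      by_cases h1 : s = t <;> by_cases h2 : s' = t <;>
        simp_all
  -- orthogonality and norms
  have horth : ∀ s s' : Fin a, s ≠ s' → ∑ j : Fin m, v s j * star (v s' j) = 0 := by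
    intro s s' h
    have := (hsplit s s').symm.trans (hrow s s')
    simpa [h] using this
  have hnorm : ∀ s : Fin a, ((M s : ℂ)) ^ 2 + ∑ j : Fin m, v s j * star (v s j) = 1 := by
    intro s
    have := (hsplit s s).symm.trans (hrow s s)
    simpa [sq, Complex.conj_ofReal] using this
  -- if the off-block row vanishes then M s = 1
  have hkey : ∀ s : Fin a, v s = 0 → M s = 1 := by
    intro s h0
    have hz : ∑ j : Fin m, v s j * star (v s j) = 0 := by
      apply Finset.sum_eq_zero; intro j _
      have : v s j = 0 := by simp [h0]
      simp [this]
    have h2 : ((M s : ℂ)) ^ 2 = 1 := by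
      have := hnorm s; rw [hz, add_zero] at this; exact this
    have h2' : (M s) ^ 2 = 1 := by
      exact_mod_cast h2
    have hfac : (M s - 1) * (M s + 1) = 0 := by nlinarith [h2']
    rcases mul_eq_zero.mp hfac with h | h
    · linarith
    · have := hMnn s; linarith
  -- nonzero rows are linearly independent
  have hli : LinearIndependent ℂ (fun s : {s : Fin a // v s ≠ 0} => v s.1) := by
    apply linearIndependent_of_ne_zero_of_inner_eq_zero
    · exact fun i => i.2
    · intro i j hij
      have h := horth i.1 j.1 (fun h => hij (Subtype.ext h))
      have hthis : (inner ℂ (v i.1) (v j.1) : ℂ)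
          = star (∑ k : Fin m, v i.1 k * star (v j.1 k)) := by
        simp [PiLp.inner_apply, mul_comm, star_sum]
      rw [hthis, h, star_zero]
  have hcard : Fintype.card {s : Fin a // v s ≠ 0} ≤ m := by
    have := hli.fintype_card_le_finrank
    simpa [finrank_euclideanSpace] using this
  -- counting
  have hsub : (Finset.univ.filter (fun s : Fin a => ¬ M s = 1)).card ≤ m := by
    calc (Finset.univ.filter (fun s : Fin a => ¬ M s = 1)).card
        ≤ (Finset.univ.filter (fun s : Fin a => v s ≠ 0)).card := by
          apply Finset.card_le_card
          intro s hs
          simp only [Finset.mem_filter, Finset.mem_univ, true_and] at hs ⊢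
          exact fun h => hs (hkey s h)
      _ ≤ m := by
          rw [← Fintype.card_subtype]
          exact hcard
  have htot := Finset.card_filter_add_card_filter_not
    (s := (Finset.univ : Finset (Fin a))) (p := fun s => M s = 1)
  rw [Nat.card_eq_fintype_card, Fintype.card_subtype]
  simp only [Finset.card_univ, Fintype.card_fin] at htot
  omega
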